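/- Let p,q,r,s > 0 with p+q+r+s=1. Let μ₁>1>μ₂>0 be the roots of qx²-(1+r)x+p=0 and μ₃>1>μ₄>0 the roots of qx²-(1-r)x+p=0, and set ζ₁ = ((1+r)²-4pq)^{-1/2}, ζ₂ = ((1-r)²-4pq)^{-1/2}. Define f_n = ½ζ₁μ₁ⁿ + ½ζ₂μ₃ⁿ for n ≤ 0 and f_n = ½ζ₁μ₂ⁿ + ½ζ₂μ₄ⁿ for n ≥ 0, and g_n = -½ζ₁μ₁ⁿ + ½ζ₂μ₃ⁿ for n ≤ 0 and g_n = -½ζ₁μ₂ⁿ + ½ζ₂μ₄ⁿ for n ≥ 0. Then for all n ∈ ℤ: f_n = δ(n,0) + p·f_{n-1} + q·f_{n+1} + r·g_n and g_n = p·g_{n-1} + q·g_{n+1} + r·f_n. -/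
import Mathlib


theorem two_level_explicit_solution
    (p q r s : ℝ) (hp : 0 < p) (hq : 0 < q) (hr : 0 < r) (hs : 0 < s)
    (hsum : p + q + r + s = 1)
    (μ₁ μ₂ μ₃ μ₄ ζ₁ ζ₂ : ℝ)
    (hμ₁ : q * μ₁ ^ 2 - (1 + r) * μ₁ + p = 0)
    (hμ₂ : q * μ₂ ^ 2 - (1 + r) * μ₂ + p = 0)
    (hμ₃ : q * μ₃ ^ 2 - (1 - r) * μ₃ + p = 0)
    (hμ₄ : q * μ₄ ^ 2 - (1 - r) * μ₄ + p = 0)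
    (hord1 : μ₁ > 1) (hord2 : 1 > μ₂) (hord3 : μ₂ > 0)
    (hord4 : μ₃ > 1) (hord5 : 1 > μ₄) (hord6 : μ₄ > 0)
    (hζ₁ : ζ₁ = ((1 + r) ^ 2 - 4 * p * q) ^ (-(1:ℝ)/2))
    (hζ₂ : ζ₂ = ((1 - r) ^ 2 - 4 * p * q) ^ (-(1:ℝ)/2))
    (f g : ℤ → ℝ)
    (hf : ∀ n : ℤ, f n = if n ≤ 0 then (1/2) * ζ₁ * μ₁ ^ n + (1/2) * ζ₂ * μ₃ ^ n
                         else (1/2) * ζ₁ * μ₂ ^ n + (1/2) * ζ₂ * μ₄ ^ n)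
    (hg : ∀ n : ℤ, g n = if n ≤ 0 then -(1/2) * ζ₁ * μ₁ ^ n + (1/2) * ζ₂ * μ₃ ^ n
                         else -(1/2) * ζ₁ * μ₂ ^ n + (1/2) * ζ₂ * μ₄ ^ n) :
    ∀ n : ℤ,
      f n = (if n = 0 then 1 else 0) + p * f (n - 1) + q * f (n + 1) + r * g n ∧
      g n = p * g (n - 1) + q * g (n + 1) + r * f n := by
  have hμ₁0 : μ₁ ≠ 0 := by linarith
  have hμ₂0 : μ₂ ≠ 0 := ne_of_gt hord3
  have hμ₃0 : μ₃ ≠ 0 := by linarith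
  have hμ₄0 : μ₄ ≠ 0 := ne_of_gt hord6
  -- Vieta for the first quadratic
  have hv1 : q * (μ₁ + μ₂) = 1 + r := by
    have h : (q * (μ₁ + μ₂) - (1 + r)) * (μ₁ - μ₂) = 0 := by
      linear_combination hμ₁ - hμ₂
    rcases mul_eq_zero.mp h with h' | h'
    · linarith
    · exfalso; have : μ₁ - μ₂ > 0 := by linarith
      linarith
  have hv2 : q * (μ₁ * μ₂) = p := by
    linear_combination -hμ₁ + μ₁ * hv1
  -- Vieta for the second quadratic
  have hv3 : q * (μ₃ + μ₄) = 1 - r := by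
    have h : (q * (μ₃ + μ₄) - (1 - r)) * (μ₃ - μ₄) = 0 := by
      linear_combination hμ₃ - hμ₄
    rcases mul_eq_zero.mp h with h' | h'
    · linarith
    · exfalso; have : μ₃ - μ₄ > 0 := by linarith
      linarith
  have hv4 : q * (μ₃ * μ₄) = p := by
    linear_combination -hμ₃ + μ₃ * hv3
  -- discriminant identities
  have hD1 : (1 + r) ^ 2 - 4 * p * q = (q * (μ₁ - μ₂)) ^ 2 := by
    linear_combination (-((1 + r) + q * (μ₁ + μ₂))) * hv1 + 4 * q * hv2
  have hD2 : (1 - r) ^ 2 - 4 * p * q = (q * (μ₃ - μ₄)) ^ 2 := by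
    linear_combination (-((1 - r) + q * (μ₃ + μ₄))) * hv3 + 4 * q * hv4
  have hpos1 : (0:ℝ) < q * (μ₁ - μ₂) := by
    have : μ₁ - μ₂ > 0 := by linarith
    positivity
  have hpos2 : (0:ℝ) < q * (μ₃ - μ₄) := by
    have : μ₃ - μ₄ > 0 := by linarith
    positivity
  have hrpow : ∀ x : ℝ, 0 < x → (x ^ 2 : ℝ) ^ (-(1:ℝ)/2) = x⁻¹ := by
    intro x hx
    rw [← Real.rpow_natCast x 2, ← Real.rpow_mul hx.le, ← Real.rpow_neg_one x]
    norm_num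
  have hA₁ : ζ₁ * (q * (μ₁ - μ₂)) = 1 := by
    rw [hζ₁, hD1, hrpow _ hpos1]
    exact inv_mul_cancel₀ (ne_of_gt hpos1)
  have hA₂ : ζ₂ * (q * (μ₃ - μ₄)) = 1 := by
    rw [hζ₂, hD2, hrpow _ hpos2]
    exact inv_mul_cancel₀ (ne_of_gt hpos2)
  have hpinv1 : p * μ₁⁻¹ = 1 + r - q * μ₁ := by
    field_simp
    linear_combination hμ₁
  have hpinv3 : p * μ₃⁻¹ = 1 - r - q * μ₃ := by
    field_simp
    linear_combination hμ₃
  -- zpow step identities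
  have key : ∀ (x : ℝ), x ≠ 0 → ∀ m : ℤ,
      x ^ m = x ^ (m - 1) * x ∧ x ^ (m + 1) = x ^ (m - 1) * (x * x) := by
    intro x hx m
    have h : x ^ (m - 1 + 1) = x ^ (m - 1) * x := zpow_add_one₀ hx (m - 1)
    have hm : m - 1 + 1 = m := by ring
    rw [hm] at h
    refine ⟨h, ?_⟩
    rw [zpow_add_one₀ hx m, h]
    ring
  intro n
  rcases lt_trichotomy n 0 with hn | hn | hn
  · -- n < 0
    have h0 : n ≤ 0 := le_of_lt hn
    have h1 : n - 1 ≤ 0 := by omega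
    have h2 : n + 1 ≤ 0 := by omega
    have hne : ¬ (n = 0) := by omega
    rw [hf n, hf (n-1), hf (n+1), hg n, hg (n-1), hg (n+1)]
    simp only [if_pos h0, if_pos h1, if_pos h2, if_neg hne]
    obtain ⟨s1, s1'⟩ := key μ₁ hμ₁0 n
    obtain ⟨s3, s3'⟩ := key μ₃ hμ₃0 n
    rw [s1, s1', s3, s3']
    constructor
    · linear_combination (-(1/2) * ζ₁ * μ₁ ^ (n-1)) * hμ₁ + (-(1/2) * ζ₂ * μ₃ ^ (n-1)) * hμ₃
    · linear_combination ((1/2) * ζ₁ * μ₁ ^ (n-1)) * hμ₁ + (-(1/2) * ζ₂ * μ₃ ^ (n-1)) * hμ₃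
  · -- n = 0
    subst hn
    rw [hf 0, hf (0-1), hf (0+1), hg 0, hg (0-1), hg (0+1)]
    norm_num [zpow_neg_one]
    constructor
    · linear_combination (-(1/2) * ζ₁) * hpinv1 + (-(1/2) * ζ₂) * hpinv3 + (1/2) * hA₁ + (1/2) * hA₂
    · linear_combination ((1/2) * ζ₁) * hpinv1 + (-(1/2) * ζ₂) * hpinv3 + (-(1/2)) * hA₁ + (1/2) * hA₂
  · -- n > 0
    rcases eq_or_lt_of_le (by omega : (1:ℤ) ≤ n) with h1 | h1
    · -- n = 1
      subst h1
      rw [hf 1, hf (1-1), hf (1+1), hg 1, hg (1-1), hg (1+1)]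
      have e2 : ∀ x : ℝ, x ^ (2:ℤ) = x * x := fun x => by
        rw [show (2:ℤ) = ((2:ℕ):ℤ) by norm_num, zpow_natCast]; ring
      norm_num [e2]
      constructor
      · linear_combination (-(1/2) * ζ₁) * hμ₂ + (-(1/2) * ζ₂) * hμ₄
      · linear_combination ((1/2) * ζ₁) * hμ₂ + (-(1/2) * ζ₂) * hμ₄
    · -- n ≥ 2
      have h0 : ¬ (n ≤ 0) := by omega
      have hle1 : ¬ (n - 1 ≤ 0) := by omega
      have hle2 : ¬ (n + 1 ≤ 0) := by omega
      have hne : ¬ (n = 0) := by omega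
      rw [hf n, hf (n-1), hf (n+1), hg n, hg (n-1), hg (n+1)]
      simp only [if_neg h0, if_neg hle1, if_neg hle2, if_neg hne]
      obtain ⟨s2, s2'⟩ := key μ₂ hμ₂0 n
      obtain ⟨s4, s4'⟩ := key μ₄ hμ₄0 n
      rw [s2, s2', s4, s4']
      constructor
      · linear_combination (-(1/2) * ζ₂ * μ₄ ^ (n-1)) * hμ₄ + (-(1/2) * ζ₁ * μ₂ ^ (n-1)) * hμ₂
      · linear_combination ((1/2) * ζ₁ * μ₂ ^ (n-1)) * hμ₂ + (-(1/2) * ζ₂ * μ₄ ^ (n-1)) * hμ₄
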